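/- arXiv:2310.20310 — 3 statements merged into one kernel-verified Lean document; each statement's English description precedes it below -/
import Mathlib

section
/- (Discrete Gronwall inequality) Let δ ≥ 0, g₀ ≥ 0, and let (aₙ), (bₙ), (cₙ), (γₙ) be sequences of nonnegative real numbers such that for all N ≥ 0, a_N + δ·∑_{n=0}^N bₙ ≤ δ·∑_{n=0}^N (γₙ aₙ + cₙ) + g₀. Assume γₙ δ < 1 for all n and set σₙ := (1 - γₙ δ)⁻¹. Then for all N ≥ 0, a_N + δ·∑_{n=0}^N bₙ ≤ (δ·∑_{n=0}^N cₙ + g₀) · exp(δ·∑_{n=0}^N σₙ γₙ). -/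
namespace Gronwall

theorem discrete_gronwall
    (δ g₀ : ℝ) (hδ : 0 ≤ δ) (hg₀ : 0 ≤ g₀)
    (a b c γ : ℕ → ℝ)
    (ha : ∀ n, 0 ≤ a n) (hb : ∀ n, 0 ≤ b n) (hc : ∀ n, 0 ≤ c n)
    (hγ : ∀ n, 0 ≤ γ n)
    (hγδ : ∀ n, γ n * δ < 1)
    (h : ∀ N : ℕ, a N + δ * ∑ n ∈ Finset.range (N + 1), b n ≤
        δ * ∑ n ∈ Finset.range (N + 1), (γ n * a n + c n) + g₀) :
    ∀ N : ℕ, a N + δ * ∑ n ∈ Finset.range (N + 1), b n ≤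
      (δ * ∑ n ∈ Finset.range (N + 1), c n + g₀) *
        Real.exp (δ * ∑ n ∈ Finset.range (N + 1), (1 - γ n * δ)⁻¹ * γ n) := by
  have hpos : ∀ n, 0 < 1 - γ n * δ := fun n => by linarith [hγδ n]
  set σ : ℕ → ℝ := fun n => (1 - γ n * δ)⁻¹ with hσdef
  have hσpos : ∀ n, 0 < σ n := fun n => inv_pos.2 (hpos n)
  set C : ℕ → ℝ := fun N => δ * ∑ n ∈ Finset.range (N+1), c n + g₀ with hCdef
  set S : ℕ → ℝ := fun N => δ * ∑ n ∈ Finset.range (N+1), (γ n * a n) with hSdef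
  set P : ℕ → ℝ := fun N => ∏ n ∈ Finset.range (N+1), (1 + σ n * γ n * δ) with hPdef
  have hterm : ∀ n, 0 ≤ σ n * γ n * δ := fun n =>
    mul_nonneg (mul_nonneg (hσpos n).le (hγ n)) hδ
  have hCnon : ∀ N, 0 ≤ C N := fun N => add_nonneg
    (mul_nonneg hδ (Finset.sum_nonneg fun i _ => hc i)) hg₀
  have hSnon : ∀ N, 0 ≤ S N := fun N =>
    mul_nonneg hδ (Finset.sum_nonneg fun i _ => mul_nonneg (hγ i) (ha i))
  have hP1 : ∀ N, 1 ≤ P N := by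
    intro N
    simp only [hPdef]
    calc (1:ℝ) = ∏ n ∈ Finset.range (N+1), 1 := by simp
      _ ≤ _ := Finset.prod_le_prod (by simp) (fun i _ => by linarith [hterm i])
  -- from h : a N ≤ S N + C N
  have haSC : ∀ N, a N ≤ S N + C N := by
    intro N
    have hN := h N
    have hsplit : ∑ n ∈ Finset.range (N+1), (γ n * a n + c n)
        = (∑ n ∈ Finset.range (N+1), γ n * a n) + ∑ n ∈ Finset.range (N+1), c n :=
      Finset.sum_add_distrib
    have hbnon : 0 ≤ δ * ∑ n ∈ Finset.range (N+1), b n :=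
      mul_nonneg hδ (Finset.sum_nonneg fun i _ => hb i)
    simp only [hSdef, hCdef]
    rw [hsplit, mul_add] at hN
    linarith
  -- a N ≤ σ N * (S (N-1) + C N), in the form we need:
  have key : ∀ N, S N + C N ≤ C N * P N := by
    intro N
    induction N with
    | zero =>
      have h0 := haSC 0
      have hS0 : S 0 = δ * (γ 0 * a 0) := by simp [hSdef]
      have hP0 : P 0 = 1 + σ 0 * γ 0 * δ := by simp [hPdef]
      rw [hS0] at h0 ⊢
      rw [hP0]
      -- from h0 : a 0 ≤ δ * (γ 0 * a 0) + C 0, i.e. (1 - γ0 δ) a0 ≤ C 0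
      have ha0 : a 0 ≤ σ 0 * C 0 := by
        have h1 : (1 - γ 0 * δ) * a 0 ≤ C 0 := by ring_nf; ring_nf at h0; linarith
        have := mul_le_mul_of_nonneg_left h1 (hσpos 0).le
        rwa [← mul_assoc, inv_mul_cancel₀ (hpos 0).ne', one_mul] at this
      have h2 : δ * (γ 0 * a 0) ≤ δ * (γ 0 * (σ 0 * C 0)) :=
        mul_le_mul_of_nonneg_left (mul_le_mul_of_nonneg_left ha0 (hγ 0)) hδ
      nlinarith [hCnon 0]
    | succ N ih =>
      have hS : S (N+1) = S N + δ * (γ (N+1) * a (N+1)) := by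
        simp only [hSdef]; rw [Finset.sum_range_succ, mul_add]
      have hC : C (N+1) = C N + δ * c (N+1) := by
        simp only [hCdef]; rw [Finset.sum_range_succ, mul_add]; ring
      have hP : P (N+1) = P N * (1 + σ (N+1) * γ (N+1) * δ) := by
        simp only [hPdef]; rw [Finset.prod_range_succ]
      have hA := haSC (N+1)
      rw [hS] at hA
      -- (1 - γ δ) a(N+1) ≤ S N + C (N+1)
      have h1 : (1 - γ (N+1) * δ) * a (N+1) ≤ S N + C (N+1) := by ring_nf; ring_nf at hA; linarith
      have ha1 : a (N+1) ≤ σ (N+1) * (S N + C (N+1)) := by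
        have := mul_le_mul_of_nonneg_left h1 (hσpos (N+1)).le
        rwa [← mul_assoc, inv_mul_cancel₀ (hpos (N+1)).ne', one_mul] at this
      -- S N + C (N+1) ≤ C (N+1) * P N
      have hT : S N + C (N+1) ≤ C (N+1) * P N := by
        have h2 : S N + C N ≤ C N * P N := ih
        have h3 : δ * c (N+1) * 1 ≤ δ * c (N+1) * P N :=
          mul_le_mul_of_nonneg_left (hP1 N) (mul_nonneg hδ (hc (N+1)))
        rw [hC]; nlinarith
      rw [hS, hC] at *
      rw [hP]
      have hTnon : 0 ≤ S N + (C N + δ * c (N+1)) :=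
        add_nonneg (hSnon N) (by nlinarith [hCnon N, mul_nonneg hδ (hc (N+1))])
      have h4 : δ * (γ (N+1) * a (N+1)) ≤
          δ * (γ (N+1) * (σ (N+1) * (S N + (C N + δ * c (N+1))))) :=
        mul_le_mul_of_nonneg_left (mul_le_mul_of_nonneg_left ha1 (hγ (N+1))) hδ
      have h5 : (S N + (C N + δ * c (N+1))) * (1 + σ (N+1) * γ (N+1) * δ) ≤
          (C N + δ * c (N+1)) * P N * (1 + σ (N+1) * γ (N+1) * δ) :=
        mul_le_mul_of_nonneg_right hT (by linarith [hterm (N+1)])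
      nlinarith
  intro N
  have hPexp : P N ≤ Real.exp (δ * ∑ n ∈ Finset.range (N+1), σ n * γ n) := by
    have : P N ≤ ∏ n ∈ Finset.range (N+1), Real.exp (σ n * γ n * δ) := by
      refine Finset.prod_le_prod (fun i _ => by linarith [hterm i]) (fun i _ => ?_)
      have := Real.add_one_le_exp (σ i * γ i * δ)
      linarith
    rw [← Real.exp_sum] at this
    convert this using 2
    rw [Finset.mul_sum]
    exact Finset.sum_congr rfl fun i _ => by ring
  have hbnon : 0 ≤ δ * ∑ n ∈ Finset.range (N+1), b n :=
    mul_nonneg hδ (Finset.sum_nonneg fun i _ => hb i)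
  have hN := h N
  have hsplit : ∑ n ∈ Finset.range (N+1), (γ n * a n + c n)
      = (∑ n ∈ Finset.range (N+1), γ n * a n) + ∑ n ∈ Finset.range (N+1), c n :=
    Finset.sum_add_distrib
  rw [hsplit, mul_add] at hN
  have hSC := (key N).trans (mul_le_mul_of_nonneg_left hPexp (hCnon N))
  simp only [hSdef, hCdef] at hSC
  calc a N + δ * ∑ n ∈ Finset.range (N+1), b n
      ≤ δ * ∑ n ∈ Finset.range (N+1), γ n * a n
        + (δ * ∑ n ∈ Finset.range (N+1), c n + g₀) := by linarith
    _ ≤ _ := by linarith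
end Gronwall
end

section
/- Let p : ℝ → ℝ be C³ and define on the interval [t^{n-1}, t^n] of length Δt, with midpoint t^{n-1/2}, the remainder R := (1/Δt)·(∫_{t^{n-1}}^{t^{n-1/2}} (t^{n-1} - s)² p'''(s) ds + ∫_{t^{n-1/2}}^{t^n} (t^n - s)² p'''(s) ds). Then R² ≤ ((Δt)³/5)·∫_{t^{n-1}}^{t^n} (p'''(s))² ds. -/
open intervalIntegral MeasureTheory

lemma cs_interval (f g : ℝ → ℝ) (a b : ℝ) (hab : a ≤ b)
    (hf : Continuous f) (hg : Continuous g) :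
    (∫ s in a..b, f s * g s) ^ 2
      ≤ (∫ s in a..b, f s ^ 2) * (∫ s in a..b, g s ^ 2) := by
  set A := ∫ s in a..b, f s ^ 2 with hA
  set B := ∫ s in a..b, f s * g s with hB
  set C := ∫ s in a..b, g s ^ 2 with hC
  have key : ∀ x : ℝ, 0 ≤ A * (x * x) + (2 * B) * x + C := by
    intro x
    have h1 : (∫ s in a..b, (x * f s + g s) ^ 2)
        = A * (x * x) + (2 * B) * x + C := by
      have e : ∀ s, (x * f s + g s) ^ 2
          = (x * x) * f s ^ 2 + (2 * x) * (f s * g s) + g s ^ 2 := by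
        intro s; ring
      simp_rw [e]
      rw [intervalIntegral.integral_add, intervalIntegral.integral_add,
        intervalIntegral.integral_const_mul, intervalIntegral.integral_const_mul]
      · ring
      · exact (continuous_const.mul (hf.pow 2)).intervalIntegrable a b
      · exact (continuous_const.mul (hf.mul hg)).intervalIntegrable a b
      · exact ((continuous_const.mul (hf.pow 2)).add
          (continuous_const.mul (hf.mul hg))).intervalIntegrable a b
      · exact (hg.pow 2).intervalIntegrable a b
    rw [← h1]
    apply intervalIntegral.integral_nonneg hab
    intro s _; positivity
  have := discrim_le_zero key
  rw [discrim] at this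
  nlinarith

lemma pow4_int_left (a b : ℝ) : (∫ s in a..b, (a - s) ^ 4) = (b - a) ^ 5 / 5 := by
  have e : ∀ s : ℝ, (a - s) ^ 4 = (s - a) ^ 4 := by intro s; ring
  simp_rw [e]
  rw [intervalIntegral.integral_comp_sub_right (fun x => x ^ 4) a, integral_pow]
  norm_num

lemma pow4_int_right (a b : ℝ) : (∫ s in a..b, (b - s) ^ 4) = (b - a) ^ 5 / 5 := by
  have e : ∀ s : ℝ, (b - s) ^ 4 = (s - b) ^ 4 := by intro s; ring
  simp_rw [e]
  rw [intervalIntegral.integral_comp_sub_right (fun x => x ^ 4) b, integral_pow]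
  ring_nf

theorem taylor_remainder_L2_estimate
    (p : ℝ → ℝ) (hp : ContDiff ℝ 3 p)
    (tnm1 tn : ℝ) (hlt : tnm1 < tn) :
    ((1 / (tn - tnm1)) *
      ((∫ s in tnm1..((tnm1 + tn) / 2), (tnm1 - s) ^ 2 * iteratedDeriv 3 p s)
        + ∫ s in ((tnm1 + tn) / 2)..tn, (tn - s) ^ 2 * iteratedDeriv 3 p s)) ^ 2
    ≤ ((tn - tnm1) ^ 3 / 5) * ∫ s in tnm1..tn, (iteratedDeriv 3 p s) ^ 2 := by
  set m := (tnm1 + tn) / 2 with hm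
  set g := iteratedDeriv 3 p with hgdef
  have hg : Continuous g := hp.continuous_iteratedDeriv 3 (by norm_num)
  have hΔ : (0:ℝ) < tn - tnm1 := by linarith
  have h1m : tnm1 ≤ m := by rw [hm]; linarith
  have hmn : m ≤ tn := by rw [hm]; linarith
  set I₁ := ∫ s in tnm1..m, (tnm1 - s) ^ 2 * g s with hI1
  set I₂ := ∫ s in m..tn, (tn - s) ^ 2 * g s with hI2
  set J₁ := ∫ s in tnm1..m, g s ^ 2 with hJ1
  set J₂ := ∫ s in m..tn, g s ^ 2 with hJ2
  set J := ∫ s in tnm1..tn, g s ^ 2 with hJ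
  have hJsum : J₁ + J₂ = J :=
    intervalIntegral.integral_add_adjacent_intervals
      ((hg.pow 2).intervalIntegrable _ _) ((hg.pow 2).intervalIntegrable _ _)
  have hJ1n : 0 ≤ J₁ := intervalIntegral.integral_nonneg h1m (fun s _ => sq_nonneg _)
  have hJ2n : 0 ≤ J₂ := intervalIntegral.integral_nonneg hmn (fun s _ => sq_nonneg _)
  have hA1 : (∫ s in tnm1..m, ((tnm1 - s) ^ 2) ^ 2) = (tn - tnm1) ^ 5 / 160 := by
    have e : ∀ s : ℝ, ((tnm1 - s) ^ 2) ^ 2 = (tnm1 - s) ^ 4 := by intro s; ring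
    simp_rw [e]
    rw [pow4_int_left]
    rw [hm]; ring
  have hA2 : (∫ s in m..tn, ((tn - s) ^ 2) ^ 2) = (tn - tnm1) ^ 5 / 160 := by
    have e : ∀ s : ℝ, ((tn - s) ^ 2) ^ 2 = (tn - s) ^ 4 := by intro s; ring
    simp_rw [e]
    rw [pow4_int_right]
    rw [hm]; ring
  have hcont1 : Continuous (fun s : ℝ => (tnm1 - s) ^ 2) :=
    (continuous_const.sub continuous_id).pow 2
  have hcont2 : Continuous (fun s : ℝ => (tn - s) ^ 2) :=
    (continuous_const.sub continuous_id).pow 2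
  have h1 : I₁ ^ 2 ≤ ((tn - tnm1) ^ 5 / 160) * J₁ := by
    have := cs_interval (fun s => (tnm1 - s) ^ 2) g tnm1 m h1m hcont1 hg
    rwa [hA1] at this
  have h2 : I₂ ^ 2 ≤ ((tn - tnm1) ^ 5 / 160) * J₂ := by
    have := cs_interval (fun s => (tn - s) ^ 2) g m tn hmn hcont2 hg
    rwa [hA2] at this
  have hsum : (I₁ + I₂) ^ 2 ≤ ((tn - tnm1) ^ 5 / 80) * J := by
    have h3 : (tn - tnm1) ^ 5 / 160 * (J₁ + J₂) = (tn - tnm1) ^ 5 / 160 * J := by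
      rw [hJsum]
    nlinarith [sq_nonneg (I₁ - I₂), h3]
  have heq : ((1 / (tn - tnm1)) * (I₁ + I₂)) ^ 2
      = (I₁ + I₂) ^ 2 / (tn - tnm1) ^ 2 := by
    field_simp
  rw [heq, div_le_iff₀ (by positivity : (0:ℝ) < (tn - tnm1) ^ 2)]
  have hJn : 0 ≤ J := by linarith
  nlinarith [pow_pos hΔ 5, mul_nonneg (le_of_lt (pow_pos hΔ 5)) hJn]
end

section
/- Let u : ℝ → ℝ be C² and on the interval [t^{n-1}, t^n] with midpoint t^{n-1/2} define r := ∫_{t^{n-1/2}}^{t^n} (t^n - s) u''(s) ds - ∫_{t^{n-1}}^{t^{n-1/2}} (t^{n-1} - s) u''(s) ds. Then r² ≤ ((Δt)³/12)·∫_{t^{n-1}}^{t^n} (u''(s))² ds, where Δt = t^n - t^{n-1}. -/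
open MeasureTheory intervalIntegral

/-- Cauchy–Schwarz for integrals of real functions. -/
lemma cs_integral {α : Type*} [MeasurableSpace α] (μ : Measure α) (f g : α → ℝ)
    (hf : MemLp f 2 μ) (hg : MemLp g 2 μ) :
    (∫ a, f a * g a ∂μ) ^ 2 ≤ (∫ a, f a ^ 2 ∂μ) * ∫ a, g a ^ 2 ∂μ := by
  set F : Lp ℝ 2 μ := hf.toLp f
  set G : Lp ℝ 2 μ := hg.toLp g
  have hFG : (inner ℝ F G : ℝ) = ∫ a, f a * g a ∂μ := by
    rw [L2.inner_def]
    refine integral_congr_ae ?_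
    filter_upwards [hf.coeFn_toLp, hg.coeFn_toLp] with a ha hb
    simp [F, G, ha, hb, RCLike.inner_apply, mul_comm]
  have hFF : (inner ℝ F F : ℝ) = ∫ a, f a ^ 2 ∂μ := by
    rw [L2.inner_def]
    refine integral_congr_ae ?_
    filter_upwards [hf.coeFn_toLp] with a ha
    simp [F, ha, RCLike.inner_apply, sq]
  have hGG : (inner ℝ G G : ℝ) = ∫ a, g a ^ 2 ∂μ := by
    rw [L2.inner_def]
    refine integral_congr_ae ?_
    filter_upwards [hg.coeFn_toLp] with a ha
    simp [G, ha, RCLike.inner_apply, sq]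
  have h := abs_real_inner_le_norm F G
  have h2 : (inner ℝ F G : ℝ) ^ 2 ≤ (‖F‖ * ‖G‖) ^ 2 := by
    rw [← sq_abs]
    exact pow_le_pow_left₀ (abs_nonneg _) h 2
  calc (∫ a, f a * g a ∂μ) ^ 2 = (inner ℝ F G : ℝ) ^ 2 := by rw [hFG]
    _ ≤ (‖F‖ * ‖G‖) ^ 2 := h2
    _ = (inner ℝ F F : ℝ) * (inner ℝ G G : ℝ) := by
        rw [mul_pow, real_inner_self_eq_norm_sq, real_inner_self_eq_norm_sq]
    _ = (∫ a, f a ^ 2 ∂μ) * ∫ a, g a ^ 2 ∂μ := by rw [hFF, hGG]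

theorem midpoint_remainder_estimate
    (u : ℝ → ℝ) (hu : ContDiff ℝ 2 u)
    (tnm1 tn : ℝ) (hlt : tnm1 < tn) :
    ((∫ s in ((tnm1 + tn) / 2)..tn, (tn - s) * iteratedDeriv 2 u s)
      - ∫ s in tnm1..((tnm1 + tn) / 2), (tnm1 - s) * iteratedDeriv 2 u s) ^ 2
    ≤ ((tn - tnm1) ^ 3 / 12) * ∫ s in tnm1..tn, (iteratedDeriv 2 u s) ^ 2 := by
  set m := (tnm1 + tn) / 2 with hm
  have hle : tnm1 ≤ tn := hlt.le
  have hm1 : tnm1 ≤ m := by rw [hm]; linarith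
  have hm2 : m ≤ tn := by rw [hm]; linarith
  set f : ℝ → ℝ := iteratedDeriv 2 u with hfdef
  have hf : Continuous f := hu.continuous_iteratedDeriv 2 (by norm_num)
  set w : ℝ → ℝ := fun s => min (s - tnm1) (tn - s) with hwdef
  have hw : Continuous w := (continuous_id.sub continuous_const).min
    (continuous_const.sub continuous_id)
  -- rewrite the two pieces using w
  have e1 : (∫ s in m..tn, (tn - s) * f s) = ∫ s in m..tn, w s * f s := by
    refine intervalIntegral.integral_congr fun s hs => ?_
    rw [Set.uIcc_of_le hm2] at hs
    have : tn - s ≤ s - tnm1 := by have := hs.1; rw [hm] at this; linarith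
    simp [hwdef, min_eq_right this]
  have e2 : (∫ s in tnm1..m, (tnm1 - s) * f s) = ∫ s in tnm1..m, (-(w s)) * f s := by
    refine intervalIntegral.integral_congr fun s hs => ?_
    rw [Set.uIcc_of_le hm1] at hs
    have : s - tnm1 ≤ tn - s := by have := hs.2; rw [hm] at this; linarith
    simp [hwdef, min_eq_left this]
  have hint1 : IntervalIntegrable (fun s => w s * f s) volume tnm1 m :=
    (hw.mul hf).intervalIntegrable _ _
  have hint2 : IntervalIntegrable (fun s => w s * f s) volume m tn :=
    (hw.mul hf).intervalIntegrable _ _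
  have hr : ((∫ s in m..tn, (tn - s) * f s) - ∫ s in tnm1..m, (tnm1 - s) * f s)
      = ∫ s in tnm1..tn, w s * f s := by
    rw [e1, e2, ← intervalIntegral.integral_add_adjacent_intervals hint1 hint2]
    simp [neg_mul, intervalIntegral.integral_neg]
    ring
  -- measure-theoretic setup
  set μ : Measure ℝ := volume.restrict (Set.Ioc tnm1 tn) with hμ
  haveI : IsFiniteMeasure μ := by
    constructor
    rw [hμ, Measure.restrict_apply_univ, Real.volume_Ioc]
    exact ENNReal.ofReal_lt_top
  have hwmem : MemLp w 2 μ := by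
    refine (memLp_top_of_bound hw.aestronglyMeasurable.restrict (tn - tnm1) ?_).mono_exponent le_top
    filter_upwards [ae_restrict_mem measurableSet_Ioc] with s hs
    have h1 : tnm1 < s := hs.1
    have h2 : s ≤ tn := hs.2
    rw [Real.norm_eq_abs, abs_le]
    constructor
    · have : -(tn - tnm1) ≤ s - tnm1 := by linarith
      have h' : -(tn - tnm1) ≤ tn - s := by linarith
      exact le_min this h'
    · exact (min_le_left _ _).trans (by linarith)
  have hfmem : MemLp f 2 μ := by
    obtain ⟨C, hC⟩ := (isCompact_Icc (a := tnm1) (b := tn)).exists_bound_of_continuousOn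
      hf.continuousOn
    refine (memLp_top_of_bound hf.aestronglyMeasurable.restrict C ?_).mono_exponent le_top
    filter_upwards [ae_restrict_mem measurableSet_Ioc] with s hs
    exact hC s ⟨hs.1.le, hs.2⟩
  have hcs := cs_integral μ w f hwmem hfmem
  -- compute ∫ w ^ 2
  have ew : (∫ s in tnm1..tn, w s ^ 2) = (tn - tnm1) ^ 3 / 12 := by
    have s1 : (∫ s in tnm1..m, w s ^ 2) = ∫ s in tnm1..m, (s - tnm1) ^ 2 := by
      refine intervalIntegral.integral_congr fun s hs => ?_
      rw [Set.uIcc_of_le hm1] at hs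
      have : s - tnm1 ≤ tn - s := by have := hs.2; rw [hm] at this; linarith
      simp [hwdef, min_eq_left this]
    have s2 : (∫ s in m..tn, w s ^ 2) = ∫ s in m..tn, (tn - s) ^ 2 := by
      refine intervalIntegral.integral_congr fun s hs => ?_
      rw [Set.uIcc_of_le hm2] at hs
      have : tn - s ≤ s - tnm1 := by have := hs.1; rw [hm] at this; linarith
      simp [hwdef, min_eq_right this]
    have c1 : (∫ s in tnm1..m, (s - tnm1) ^ 2) = (m - tnm1) ^ 3 / 3 := by
      rw [intervalIntegral.integral_comp_sub_right (fun x => x ^ 2) tnm1, integral_pow]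
      norm_num
    have c2 : (∫ s in m..tn, (tn - s) ^ 2) = (tn - m) ^ 3 / 3 := by
      rw [intervalIntegral.integral_comp_sub_left (fun x => x ^ 2) tn, integral_pow]
      norm_num
    rw [← intervalIntegral.integral_add_adjacent_intervals (f := fun s => w s ^ 2)
      ((hw.pow 2).intervalIntegrable tnm1 m) ((hw.pow 2).intervalIntegrable m tn),
      s1, s2, c1, c2, hm]
    ring
  -- put everything together
  rw [hr, intervalIntegral.integral_of_le hle, intervalIntegral.integral_of_le hle, ← hμ]
  calc (∫ s, w s * f s ∂μ) ^ 2 ≤ (∫ s, w s ^ 2 ∂μ) * ∫ s, f s ^ 2 ∂μ := hcs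
    _ = ((tn - tnm1) ^ 3 / 12) * ∫ s, f s ^ 2 ∂μ := by
        rw [hμ, ← intervalIntegral.integral_of_le hle, ew]
end
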